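/- arXiv:1708.04369 — 3 statements merged into one kernel-verified Lean document; each statement's English description precedes it below -/
import Mathlib

section
/- If a sequence of non-negative reals a_0, a_1, ..., a_{C-1} satisfies a_p > ε · Σ_{i=0}^{p-1} a_i for all p in the range [C − (1/ε)², C − 1] (where (1/ε)² is an integer and C > (1/ε)²), then Σ_{i=0}^{C−(1/ε)²−1} a_i ≤ ε · Σ_{i=C−(1/ε)²}^{C−1} a_i. -/
/-- If none of the last (1/ε)² batches is good, then the first C − (1/ε)² batches
contain at most an ε fraction of the mass of the last (1/ε)² batches. -/
theorem stmt_5 (ε : ℝ) (K C : ℕ) (a : ℕ → ℝ)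
    (hε0 : 0 < ε) (hε1 : ε < 1)
    (hK : (K : ℝ) = (1/ε)^2) (hKC : K < C)
    (ha : ∀ i, 0 ≤ a i)
    (hbad : ∀ p, C - K ≤ p → p ≤ C - 1 →
      a p > ε * ∑ i ∈ Finset.range p, a i) :
    ∑ i ∈ Finset.range (C - K), a i ≤ ε * ∑ i ∈ Finset.Ico (C - K) C, a i := by
  set S := ∑ i ∈ Finset.range (C - K), a i with hS
  have hS0 : 0 ≤ S := Finset.sum_nonneg fun i _ => ha i
  have hkey : ∀ p ∈ Finset.Ico (C - K) C, ε * S ≤ a p := by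
    intro p hp
    rw [Finset.mem_Ico] at hp
    have h1 := hbad p hp.1 (by omega)
    have h2 : S ≤ ∑ i ∈ Finset.range p, a i :=
      Finset.sum_le_sum_of_subset_of_nonneg (Finset.range_subset_range.2 hp.1)
        (fun i _ _ => ha i)
    nlinarith
  have hcard : (Finset.Ico (C - K) C).card = K := by
    rw [Nat.card_Ico]; omega
  have hsum : (K : ℝ) * (ε * S) ≤ ∑ i ∈ Finset.Ico (C - K) C, a i := by
    calc (K : ℝ) * (ε * S) = ∑ _p ∈ Finset.Ico (C - K) C, ε * S := by
          rw [Finset.sum_const, hcard, nsmul_eq_mul]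
      _ ≤ _ := Finset.sum_le_sum hkey
  have hεK : ε * ((K : ℝ) * ε) = 1 := by
    rw [hK]; field_simp
  nlinarith [hsum, hS0]
end

section
/- In any feasible fractional LP solution, if j ≺ i, then the fractional support interval of i cannot be contained in the left half of the minimal laminar interval containing the support of j, whenever j has positive fractional support in the right half of that interval. Formally: if y is feasible for the time-indexed LP, j ≺ i, I is an interval with midpoint μ, the support of j intersects (μ, right end of I], and the support of i is contained in [left end of I, μ], then we reach a contradiction — i.e., such a configuration is infeasible. -/
/-- If j ≺ i, j has positive support in the right half (μ, b] of an interval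
[a,b], and the support of i lies in the left half [a, μ], the LP is infeasible. -/
theorem stmt_11 (n T : ℕ) (y : Fin n → ℕ → ℝ) (j i : Fin n) (a μ b : ℕ)
    (hnonneg : ∀ j' t, 0 ≤ y j' t)
    (hzero : ∀ j' t, t = 0 ∨ T < t → y j' t = 0)
    (hsum : ∀ j', ∑ t ∈ Finset.Icc 1 T, y j' t = 1)
    (hprec : ∀ t, ∑ t' ∈ Finset.Icc 1 t, y j t' ≥ ∑ t' ∈ Finset.Icc 1 (t+1), y i t')
    (haμ : a ≤ μ) (hμb : μ ≤ b)
    (hjsupp : ∃ t, μ < t ∧ t ≤ b ∧ 0 < y j t)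
    (hisupp : ∀ t, y i t ≠ 0 → a ≤ t ∧ t ≤ μ) :
    False := by
  obtain ⟨t0, hμt0, ht0b, ht0pos⟩ := hjsupp
  -- t0 is in [1, T]
  have ht0T : t0 ≤ T := by
    by_contra h
    have := hzero j t0 (Or.inr (Nat.lt_of_not_le h))
    linarith
  have ht01 : 1 ≤ t0 := by
    rcases Nat.eq_zero_or_pos t0 with h | h
    · have := hzero j t0 (Or.inl h)
      linarith
    · exact h
  -- μ ≥ 1, else y i ≡ 0 contradicting hsum
  rcases Nat.eq_zero_or_pos μ with hμ0 | hμ1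
  · have h1 : (1:ℝ) = 0 := by
      rw [← hsum i, Finset.sum_eq_zero]
      intro t ht
      by_contra h
      have h2 := (hisupp t h).2
      simp only [Finset.mem_Icc] at ht
      omega
    norm_num at h1
  -- ∑_{1..μ} y i = 1
  have hiμ : ∑ t' ∈ Finset.Icc 1 μ, y i t' = 1 := by
    rw [← hsum i]
    apply Finset.sum_subset
    · apply Finset.Icc_subset_Icc_right; omega
    · intro t ht hnot
      by_contra h
      have h2 := (hisupp t h).2
      simp only [Finset.mem_Icc] at ht hnot
      omega
  -- precedence at μ - 1
  have hp := hprec (μ - 1)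
  rw [Nat.sub_add_cancel hμ1, hiμ] at hp
  -- but ∑_{1..μ-1} y j ≤ 1 - y j t0 < 1
  have hsub : Finset.Icc 1 (μ - 1) ⊆ Finset.Icc 1 T \ {t0} := by
    intro t ht
    simp only [Finset.mem_Icc] at ht
    simp only [Finset.mem_sdiff, Finset.mem_Icc, Finset.mem_singleton]
    omega
  have hle : ∑ t' ∈ Finset.Icc 1 (μ - 1), y j t' ≤
      ∑ t' ∈ Finset.Icc 1 T \ {t0}, y j t' :=
    Finset.sum_le_sum_of_subset_of_nonneg hsub (fun t _ _ => hnonneg j t)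
  have ht0mem : t0 ∈ Finset.Icc 1 T := Finset.mem_Icc.mpr ⟨ht01, ht0T⟩
  have hsplit : ∑ t' ∈ Finset.Icc 1 T \ {t0}, y j t' = 1 - y j t0 := by
    have := Finset.sum_sdiff_eq_sub (Finset.singleton_subset_iff.mpr ht0mem)
      (f := y j)
    rw [this, hsum j, Finset.sum_singleton]
  rw [hsplit] at hle
  linarith
end

section
/- Summing the per-call discard bound over a recursion tree: if in each recursive call on an interval I the algorithm discards at most (ε/(4m))·(number of jobs it handles exclusively) + ε|I|/(4 log n) jobs, the exclusive job sets across calls are disjoint subsets of [n] with n ≤ mT, the intervals at each level of the laminar family partition [T], and there are at most log n levels, then the total number of discarded jobs is at most εT/4 + εT/4 = εT/2. -/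
/-- Summing the per-call discard bound over the recursion tree gives at most εT/2
discarded jobs in total. -/
theorem stmt_17 {ι : Type*} [Fintype ι] (n Lv : ℕ) (ε m T : ℝ)
    (hε : 0 < ε) (hm : 0 < m) (hT : 0 < T) (hn : 1 < n)
    (len : ι → ℝ) (jobs : ι → Finset (Fin n)) (discard : ι → ℝ)
    (level : ι → ℕ)
    (hlev : ∀ c, level c < Lv)
    (hLv : (Lv : ℝ) ≤ Real.logb 2 n)
    (hlennn : ∀ c, 0 ≤ len c)
    (hlen : ∀ ℓ : ℕ, ∑ c ∈ Finset.univ.filter (fun c => level c = ℓ), len c ≤ T)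
    (hdisj : ∀ c₁ c₂, c₁ ≠ c₂ → Disjoint (jobs c₁) (jobs c₂))
    (hnT : (n : ℝ) ≤ m * T)
    (hdisc : ∀ c, discard c ≤ ε / (4 * m) * (jobs c).card
      + ε * len c / (4 * Real.logb 2 n)) :
    ∑ c, discard c ≤ ε * T / 2 := by
  set L := Real.logb 2 n with hLdef
  have hL : 0 < L := Real.logb_pos (by norm_num) (by exact_mod_cast hn)
  -- sum of cardinalities
  have hcard : (∑ c : ι, ((jobs c).card : ℝ)) ≤ (n : ℝ) := by
    have h1 : (∑ c : ι, (jobs c).card) = (Finset.univ.biUnion jobs).card := by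
      rw [Finset.card_biUnion]
      intro x _ y _ hxy
      exact hdisj x y hxy
    have h2 : (Finset.univ.biUnion jobs).card ≤ n := by
      simpa using Finset.card_le_univ (Finset.univ.biUnion jobs)
    calc (∑ c : ι, ((jobs c).card : ℝ)) = ((∑ c : ι, (jobs c).card : ℕ) : ℝ) := by
          push_cast; ring
      _ ≤ (n : ℝ) := by exact_mod_cast h1 ▸ h2
  -- sum of lengths
  have hlensum : (∑ c : ι, len c) ≤ (Lv : ℝ) * T := by
    have hfib : ∑ ℓ ∈ Finset.range Lv,
        ∑ c ∈ Finset.univ.filter (fun c => level c = ℓ), len c = ∑ c : ι, len c := by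
      apply Finset.sum_fiberwise_of_maps_to
      intro c _
      exact Finset.mem_range.mpr (hlev c)
    calc (∑ c : ι, len c)
        = ∑ ℓ ∈ Finset.range Lv,
            ∑ c ∈ Finset.univ.filter (fun c => level c = ℓ), len c := hfib.symm
      _ ≤ ∑ _ℓ ∈ Finset.range Lv, T := Finset.sum_le_sum (fun ℓ _ => hlen ℓ)
      _ = (Lv : ℝ) * T := by simp [mul_comm]
  have hlenL : (∑ c : ι, len c) ≤ L * T :=
    hlensum.trans (mul_le_mul_of_nonneg_right hLv hT.le)
  calc ∑ c, discard c
      ≤ ∑ c, (ε / (4 * m) * (jobs c).card + ε * len c / (4 * L)) :=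
        Finset.sum_le_sum (fun c _ => hdisc c)
    _ = ε / (4 * m) * (∑ c : ι, ((jobs c).card : ℝ))
        + ε / (4 * L) * (∑ c : ι, len c) := by
        rw [Finset.sum_add_distrib, Finset.mul_sum, Finset.mul_sum]
        congr 1
        · exact Finset.sum_congr rfl (fun c _ => by ring)
    _ ≤ ε / (4 * m) * (m * T) + ε / (4 * L) * (L * T) := by
        have h1 := mul_le_mul_of_nonneg_left (hcard.trans hnT) (by positivity : (0:ℝ) ≤ ε / (4 * m))
        have h2 := mul_le_mul_of_nonneg_left hlenL (by positivity : (0:ℝ) ≤ ε / (4 * L))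
        linarith
    _ = ε * T / 2 := by
        field_simp
        ring
end
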